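/- Let (W,S) be a Coxeter system and suppose W = ⟨F⟩ × ⟨G⟩ = ⟨H⟩ × ⟨I⟩ as internal direct products of visual subgroups, where F ∪ G = S = H ∪ I. Then W = ⟨F⟩ × ⟨H − F⟩ × ⟨G ∩ I⟩. -/

import Mathlib

open Subgroup

/-- If `W = ⟨F⟩ × ⟨G⟩ = ⟨H⟩ × ⟨I⟩` as internal direct products of visual
subgroups of a Coxeter system, with `F ∪ G = S = H ∪ I`, then
`W = ⟨F⟩ × ⟨H − F⟩ × ⟨G ∩ I⟩` as an internal direct product. -/
theorem visual_direct_product_refine {B : Type*} {W : Type*} [Group W]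
    (M : CoxeterMatrix B) (cs : CoxeterSystem M W) (F G H I : Set B)
    (hFG : F ∪ G = Set.univ) (hFGd : Disjoint F G)
    (hHI : H ∪ I = Set.univ) (hHId : Disjoint H I)
    (hcFG : ∀ f ∈ F, ∀ g ∈ G, Commute (cs.simple f) (cs.simple g))
    (hcHI : ∀ h ∈ H, ∀ i ∈ I, Commute (cs.simple h) (cs.simple i))
    (hbFG : Function.Bijective (fun p :
        closure (cs.simple '' F) × closure (cs.simple '' G) =>
        (p.1 : W) * (p.2 : W)))
    (hbHI : Function.Bijective (fun p :
        closure (cs.simple '' H) × closure (cs.simple '' I) =>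
        (p.1 : W) * (p.2 : W))) :
    (∀ s ∈ F, ∀ t ∈ H \ F, Commute (cs.simple s) (cs.simple t)) ∧
    (∀ s ∈ F, ∀ t ∈ G ∩ I, Commute (cs.simple s) (cs.simple t)) ∧
    (∀ s ∈ H \ F, ∀ t ∈ G ∩ I, Commute (cs.simple s) (cs.simple t)) ∧
    Function.Bijective (fun t :
        closure (cs.simple '' F) × closure (cs.simple '' (H \ F)) ×
          closure (cs.simple '' (G ∩ I)) =>
        (t.1 : W) * (t.2.1 : W) * (t.2.2 : W)) := by
  classical
  have hGF : ∀ t, t ∉ F → t ∈ G := by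
    intro t ht
    have h1 : t ∈ F ∪ G := by rw [hFG]; trivial
    exact h1.resolve_left ht
  have hIH : ∀ t, t ∉ H → t ∈ I := by
    intro t ht
    have h1 : t ∈ H ∪ I := by rw [hHI]; trivial
    exact h1.resolve_left ht
  have hHFG : H \ F ⊆ G := fun t ht => hGF t ht.2
  have hGdec : G = (H \ F) ∪ (G ∩ I) := by
    ext t
    constructor
    · intro htG
      by_cases htH : t ∈ H
      · exact Or.inl ⟨htH, fun htF => Set.disjoint_left.mp hFGd htF htG⟩
      · exact Or.inr ⟨htG, hIH t htH⟩
    · rintro (ht | ht)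
      · exact hHFG ht
      · exact ht.1
  have c1 : ∀ s ∈ F, ∀ t ∈ H \ F, Commute (cs.simple s) (cs.simple t) :=
    fun s hs t ht => hcFG s hs t (hHFG ht)
  have c2 : ∀ s ∈ F, ∀ t ∈ G ∩ I, Commute (cs.simple s) (cs.simple t) :=
    fun s hs t ht => hcFG s hs t ht.1
  have c3 : ∀ s ∈ H \ F, ∀ t ∈ G ∩ I, Commute (cs.simple s) (cs.simple t) :=
    fun s hs t ht => hcHI s hs.1 t ht.2
  refine ⟨c1, c2, c3, ?_⟩
  set B1 := closure (cs.simple '' (H \ F)) with hB1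
  set B2 := closure (cs.simple '' (G ∩ I)) with hB2
  -- all elements of B1 commute with all elements of B2
  have commB : ∀ a ∈ B1, ∀ b ∈ B2, Commute a b := by
    intro a ha
    induction ha using closure_induction with
    | mem x hx =>
      intro b hb
      induction hb using closure_induction with
      | mem y hy =>
        obtain ⟨s, hs, rfl⟩ := hx
        obtain ⟨t, ht, rfl⟩ := hy
        exact c3 s hs t ht
      | one => exact Commute.one_right _
      | mul y z _ _ h1 h2 => exact h1.mul_right h2
      | inv y _ h => exact h.inv_right
    | one => intro b hb; exact Commute.one_left _
    | mul x y _ _ h1 h2 => intro b hb; exact (h1 b hb).mul_left (h2 b hb)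
    | inv x _ h => intro b hb; exact (h b hb).inv_left
  -- closure of G splits
  have hsup : closure (cs.simple '' G) = B1 ⊔ B2 := by
    rw [hGdec, Set.image_union, Subgroup.closure_union]
  have hB1H : B1 ≤ closure (cs.simple '' H) :=
    closure_mono (Set.image_mono Set.diff_subset)
  have hB2I : B2 ≤ closure (cs.simple '' I) :=
    closure_mono (Set.image_mono Set.inter_subset_right)
  have hB1G : B1 ≤ closure (cs.simple '' G) :=
    closure_mono (Set.image_mono hHFG)
  have hB2G : B2 ≤ closure (cs.simple '' G) :=
    closure_mono (Set.image_mono Set.inter_subset_left)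
  -- decomposition of elements of closure G
  have decomp : ∀ g ∈ closure (cs.simple '' G),
      ∃ y ∈ B1, ∃ z ∈ B2, g = y * z := by
    intro g hg
    rw [hGdec, Set.image_union] at hg
    induction hg using closure_induction with
    | mem x hx =>
      rcases hx with hx | hx
      · exact ⟨x, subset_closure hx, 1, one_mem _, (mul_one x).symm⟩
      · exact ⟨1, one_mem _, x, subset_closure hx, (one_mul x).symm⟩
    | one => exact ⟨1, one_mem _, 1, one_mem _, (one_mul 1).symm⟩
    | mul x y _ _ h1 h2 =>
      obtain ⟨a, ha, b, hb, rfl⟩ := h1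
      obtain ⟨a', ha', b', hb', rfl⟩ := h2
      refine ⟨a * a', mul_mem ha ha', b * b', mul_mem hb hb', ?_⟩
      have hc : Commute b a' := commB a' ha' b hb |>.symm
      exact hc.mul_mul_mul_comm a b'
    | inv x _ h =>
      obtain ⟨a, ha, b, hb, rfl⟩ := h
      refine ⟨a⁻¹, inv_mem ha, b⁻¹, inv_mem hb, ?_⟩
      rw [mul_inv_rev, (commB a ha b hb).inv_inv.eq]
  -- injectivity of the inner multiplication map
  have inj12 : ∀ y ∈ B1, ∀ z ∈ B2, ∀ y' ∈ B1, ∀ z' ∈ B2,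
      y * z = y' * z' → y = y' ∧ z = z' := by
    intro y hy z hz y' hy' z' hz' heq
    have := hbHI.injective (a₁ := (⟨y, hB1H hy⟩, ⟨z, hB2I hz⟩))
      (a₂ := (⟨y', hB1H hy'⟩, ⟨z', hB2I hz'⟩)) (by simpa using heq)
    obtain ⟨h1, h2⟩ := Prod.mk.injEq .. ▸ this
    exact ⟨congrArg Subtype.val h1, congrArg Subtype.val h2⟩
  constructor
  · rintro ⟨x, y, z⟩ ⟨x', y', z'⟩ heq
    simp only at heq
    have hyz : (y : W) * z ∈ closure (cs.simple '' G) :=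
      mul_mem (hB1G y.2) (hB2G z.2)
    have hyz' : (y' : W) * z' ∈ closure (cs.simple '' G) :=
      mul_mem (hB1G y'.2) (hB2G z'.2)
    have h2 := hbFG.injective (a₁ := (x, ⟨(y : W) * z, hyz⟩))
      (a₂ := (x', ⟨(y' : W) * z', hyz'⟩))
      (by simpa [mul_assoc] using heq)
    obtain ⟨hx, hrest⟩ := Prod.mk.injEq .. ▸ h2
    have hrest' : (y : W) * z = (y' : W) * z' := congrArg Subtype.val hrest
    obtain ⟨hy, hz⟩ := inj12 y y.2 z z.2 y' y'.2 z' z'.2 hrest'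
    refine Prod.ext hx (Prod.ext (Subtype.ext hy) (Subtype.ext hz))
  · intro w
    obtain ⟨⟨x, g⟩, hw⟩ := hbFG.surjective w
    obtain ⟨y, hy, z, hz, hg⟩ := decomp g g.2
    refine ⟨(x, ⟨y, hy⟩, ⟨z, hz⟩), ?_⟩
    simp only
    rw [mul_assoc, ← hg]
    exact hw
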